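/- Let {A, S, Π} be an S-node with S boundedly invertible, and let z ∈ ℂ be such that both I − zA* and I − z̄A* are boundedly invertible. Then the frame 𝔄(S,z) is an invertible 2p×2p matrix and 𝔄(S,z)^{−1} = J · 𝔄(S, z̄)* · J. -/

import Mathlib

open Matrix MeasureTheory ContinuousLinearMap
open scoped ComplexOrder

noncomputable section

/-- The matrix (in the standard basis) of a continuous linear operator on `ℂ^p`. -/
def opToMat {p : ℕ} (T : EuclideanSpace ℂ (Fin p) →L[ℂ] EuclideanSpace ℂ (Fin p)) :
    Matrix (Fin p) (Fin p) ℂ :=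
  (Matrix.toEuclideanCLM (𝕜 := ℂ) (n := Fin p)).symm T

/-- The `2p × 2p` matrix `Π^* B Π` with blocks `Φ_i^* B Φ_j`, for `Π = [Φ₁ Φ₂]`. -/
def sandwich {p : ℕ} {H : Type*} [NormedAddCommGroup H] [InnerProductSpace ℂ H]
    [CompleteSpace H] (B : H →L[ℂ] H) (Φ₁ Φ₂ : EuclideanSpace ℂ (Fin p) →L[ℂ] H) :
    Matrix (Fin p ⊕ Fin p) (Fin p ⊕ Fin p) ℂ :=
  Matrix.fromBlocks
    (opToMat (adjoint Φ₁ ∘L B ∘L Φ₁)) (opToMat (adjoint Φ₁ ∘L B ∘L Φ₂))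
    (opToMat (adjoint Φ₂ ∘L B ∘L Φ₁)) (opToMat (adjoint Φ₂ ∘L B ∘L Φ₂))

/-- The frame `𝔄(S,z) = I_{2p} - i z Π^* (I - z A^*)⁻¹ S⁻¹ Π J` of an `S`-node,
identified with a `2p × 2p` complex matrix. -/
def frameS {p : ℕ} {H : Type*} [NormedAddCommGroup H] [InnerProductSpace ℂ H]
    [CompleteSpace H] (A S : H →L[ℂ] H) (Φ₁ Φ₂ : EuclideanSpace ℂ (Fin p) →L[ℂ] H)
    (z : ℂ) : Matrix (Fin p ⊕ Fin p) (Fin p ⊕ Fin p) ℂ :=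
  1 - (Complex.I * z) •
    (sandwich (Ring.inverse (1 - z • adjoint A) ∘L Ring.inverse S) Φ₁ Φ₂ *
      Matrix.fromBlocks 0 1 1 0)

/-- The `p × p` matrix `ρ(z,w) = i (w - z) Φ₂^* (I - z A^*)⁻¹ S⁻¹ (I - w A)⁻¹ Φ₂`. -/
def rhoS {p : ℕ} {H : Type*} [NormedAddCommGroup H] [InnerProductSpace ℂ H]
    [CompleteSpace H] (A S : H →L[ℂ] H) (Φ₂ : EuclideanSpace ℂ (Fin p) →L[ℂ] H)
    (z w : ℂ) : Matrix (Fin p) (Fin p) ℂ :=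
  (Complex.I * (w - z)) • opToMat (adjoint Φ₂ ∘L Ring.inverse (1 - z • adjoint A) ∘L
    Ring.inverse S ∘L Ring.inverse (1 - w • A) ∘L Φ₂)

section AuxLemmas

variable {p : ℕ} {H : Type*} [NormedAddCommGroup H] [InnerProductSpace ℂ H] [CompleteSpace H]

lemma opToMat_comp (T U : EuclideanSpace ℂ (Fin p) →L[ℂ] EuclideanSpace ℂ (Fin p)) :
    opToMat (T ∘L U) = opToMat T * opToMat U := by
  rw [← ContinuousLinearMap.mul_def]; exact map_mul _ _ _

lemma opToMat_add (T U : EuclideanSpace ℂ (Fin p) →L[ℂ] EuclideanSpace ℂ (Fin p)) :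
    opToMat (T + U) = opToMat T + opToMat U := map_add _ _ _

lemma opToMat_sub (T U : EuclideanSpace ℂ (Fin p) →L[ℂ] EuclideanSpace ℂ (Fin p)) :
    opToMat (T - U) = opToMat T - opToMat U := map_sub _ _ _

lemma opToMat_smul (c : ℂ) (T : EuclideanSpace ℂ (Fin p) →L[ℂ] EuclideanSpace ℂ (Fin p)) :
    opToMat (c • T) = c • opToMat T := map_smul _ _ _

lemma opToMat_zero : opToMat (0 : EuclideanSpace ℂ (Fin p) →L[ℂ] EuclideanSpace ℂ (Fin p)) = 0 :=
  map_zero _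

lemma opToMat_adjoint (T : EuclideanSpace ℂ (Fin p) →L[ℂ] EuclideanSpace ℂ (Fin p)) :
    opToMat (adjoint T) = (opToMat T)ᴴ := by
  rw [← ContinuousLinearMap.star_eq_adjoint, ← Matrix.star_eq_conjTranspose]
  exact (Matrix.toEuclideanCLM (𝕜 := ℂ) (n := Fin p)).symm.map_star' T

lemma sandwich_smul (c : ℂ) (B : H →L[ℂ] H) (Φ₁ Φ₂ : EuclideanSpace ℂ (Fin p) →L[ℂ] H) :
    sandwich (c • B) Φ₁ Φ₂ = c • sandwich B Φ₁ Φ₂ := by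
  simp [sandwich, ContinuousLinearMap.comp_smul, ContinuousLinearMap.smul_comp, opToMat_smul,
    Matrix.fromBlocks_smul]

lemma sandwich_sub (B B' : H →L[ℂ] H) (Φ₁ Φ₂ : EuclideanSpace ℂ (Fin p) →L[ℂ] H) :
    sandwich (B - B') Φ₁ Φ₂ = sandwich B Φ₁ Φ₂ - sandwich B' Φ₁ Φ₂ := by
  simp only [sandwich, ContinuousLinearMap.comp_sub, ContinuousLinearMap.sub_comp, opToMat_sub]
  ext (i | i) (j | j) <;> simp [Matrix.fromBlocks]

lemma sandwich_zero (Φ₁ Φ₂ : EuclideanSpace ℂ (Fin p) →L[ℂ] H) :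
    sandwich (0 : H →L[ℂ] H) Φ₁ Φ₂ = 0 := by
  simp [sandwich, opToMat_zero, Matrix.fromBlocks_zero]

lemma sandwich_conjTranspose (B : H →L[ℂ] H) (Φ₁ Φ₂ : EuclideanSpace ℂ (Fin p) →L[ℂ] H) :
    (sandwich B Φ₁ Φ₂)ᴴ = sandwich (adjoint B) Φ₁ Φ₂ := by
  simp only [sandwich, Matrix.fromBlocks_conjTranspose, ← opToMat_adjoint,
    ContinuousLinearMap.adjoint_comp, ContinuousLinearMap.adjoint_adjoint]
  rfl

lemma sandwich_J_sandwich (B B' : H →L[ℂ] H) (Φ₁ Φ₂ : EuclideanSpace ℂ (Fin p) →L[ℂ] H) :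
    sandwich B Φ₁ Φ₂ * Matrix.fromBlocks 0 1 1 0 * sandwich B' Φ₁ Φ₂ =
      sandwich (B ∘L (Φ₁ ∘L adjoint Φ₂ + Φ₂ ∘L adjoint Φ₁) ∘L B') Φ₁ Φ₂ := by
  have hc : ∀ (Ψa Ψb : EuclideanSpace ℂ (Fin p) →L[ℂ] H),
      opToMat (adjoint Ψa ∘L B ∘L Φ₂) * opToMat (adjoint Φ₁ ∘L B' ∘L Ψb) +
        opToMat (adjoint Ψa ∘L B ∘L Φ₁) * opToMat (adjoint Φ₂ ∘L B' ∘L Ψb) =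
      opToMat (adjoint Ψa ∘L ((B ∘L ((Φ₁ ∘L adjoint Φ₂ + Φ₂ ∘L adjoint Φ₁) ∘L B')) ∘L Ψb)) := by
    intro Ψa Ψb
    rw [← opToMat_comp, ← opToMat_comp, ← opToMat_add]
    congr 1
    simp only [ContinuousLinearMap.add_comp, ContinuousLinearMap.comp_add,
      ContinuousLinearMap.comp_assoc]
    abel
  simp only [sandwich, Matrix.fromBlocks_multiply, Matrix.mul_zero, Matrix.zero_mul,
    Matrix.mul_one, Matrix.one_mul, zero_add, add_zero]
  rw [hc Φ₁ Φ₁, hc Φ₁ Φ₂, hc Φ₂ Φ₁, hc Φ₂ Φ₂]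

lemma key_op (A S : H →L[ℂ] H) (z : ℂ)
    (hz : IsUnit ((1 : H →L[ℂ] H) - z • adjoint A))
    (hv : IsUnit ((1 : H →L[ℂ] H) - z • A)) :
    (Complex.I * z) • (Ring.inverse S * Ring.inverse ((1 : H →L[ℂ] H) - z • A) -
        Ring.inverse ((1 : H →L[ℂ] H) - z • adjoint A) * Ring.inverse S) +
      (Complex.I * z ^ 2) • (Ring.inverse ((1 : H →L[ℂ] H) - z • adjoint A) *
        (adjoint A * Ring.inverse S - Ring.inverse S * A) *
        Ring.inverse ((1 : H →L[ℂ] H) - z • A)) = 0 := by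
  set u : H →L[ℂ] H := 1 - z • adjoint A with hu
  set v : H →L[ℂ] H := 1 - z • A with hvdef
  set r := Ring.inverse u with hr
  set l := Ring.inverse v with hl
  set s := Ring.inverse S with hs
  have hur : u * r = 1 := Ring.mul_inverse_cancel _ hz
  have hru : r * u = 1 := Ring.inverse_mul_cancel _ hz
  have hvl : v * l = 1 := Ring.mul_inverse_cancel _ hv
  have hlv : l * v = 1 := Ring.inverse_mul_cancel _ hv
  set E : H →L[ℂ] H := (Complex.I * z) • (s * l - r * s) +
      (Complex.I * z ^ 2) • (r * (adjoint A * s - s * A) * l) with hE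
  have hx : ∀ X : H →L[ℂ] H, r * (u * X * v) * l = X := by
    intro X
    calc r * (u * X * v) * l = (r * u) * X * (v * l) := by noncomm_ring
      _ = X := by rw [hru, hvl, one_mul, mul_one]
  have h0 : u * E * v = 0 := by
    have e1 : u * ((Complex.I * z) • (s * l - r * s)) * v =
        (Complex.I * z) • (u * s - s * v) := by
      rw [mul_smul_comm, smul_mul_assoc]
      congr 1
      calc u * (s * l - r * s) * v = u * s * (l * v) - (u * r) * (s * v) := by noncomm_ring
        _ = u * s - s * v := by rw [hlv, hur, mul_one, one_mul]
    have e2 : u * ((Complex.I * z ^ 2) • (r * (adjoint A * s - s * A) * l)) * v =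
        (Complex.I * z ^ 2) • (adjoint A * s - s * A) := by
      rw [mul_smul_comm, smul_mul_assoc]
      congr 1
      calc u * (r * (adjoint A * s - s * A) * l) * v
          = (u * r) * (adjoint A * s - s * A) * (l * v) := by noncomm_ring
        _ = adjoint A * s - s * A := by rw [hur, hlv, one_mul, mul_one]
    rw [hE, mul_add, add_mul, e1, e2]
    have e3 : u * s - s * v = z • (s * A - adjoint A * s) := by
      rw [hu, hvdef, sub_mul, mul_sub, one_mul, mul_one, smul_mul_assoc, mul_smul_comm,
        smul_sub]
      abel
    rw [e3, smul_smul]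
    rw [show Complex.I * z * z = Complex.I * z ^ 2 by ring]
    rw [smul_sub, smul_sub]
    abel
  calc E = r * (u * E * v) * l := (hx E).symm
    _ = 0 := by rw [h0, mul_zero, zero_mul]

lemma expand_aux {A : Type*} [Ring A] [Algebra ℂ A] (c : ℂ) (P Q : A) :
    (1 - c • P) * (1 + c • Q) = 1 + (c • Q - c • P - (c * c) • (P * Q)) := by
  rw [sub_mul, one_mul, mul_add, mul_one, smul_mul_assoc, mul_smul_comm, smul_smul]
  abel

end AuxLemmas

set_option maxHeartbeats 1000000 in
/-- the frame is invertible and `𝔄(S,z)⁻¹ = J 𝔄(S, conj z)^* J`. -/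
theorem frame_inverse_formula
    {p : ℕ} (hp : 1 ≤ p) {H : Type*} [NormedAddCommGroup H] [InnerProductSpace ℂ H]
    [CompleteSpace H] (A S : H →L[ℂ] H) (Φ₁ Φ₂ : EuclideanSpace ℂ (Fin p) →L[ℂ] H)
    (hS : IsSelfAdjoint S)
    (hnode : A ∘L S - S ∘L adjoint A =
      Complex.I • (Φ₁ ∘L adjoint Φ₂ + Φ₂ ∘L adjoint Φ₁))
    (hSinv : IsUnit S) (z : ℂ)
    (hz : IsUnit ((1 : H →L[ℂ] H) - z • adjoint A))
    (hz' : IsUnit ((1 : H →L[ℂ] H) - (starRingEnd ℂ z) • adjoint A)) :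
    IsUnit (frameS A S Φ₁ Φ₂ z) ∧
      (frameS A S Φ₁ Φ₂ z)⁻¹ =
        Matrix.fromBlocks 0 1 1 0 * (frameS A S Φ₁ Φ₂ (starRingEnd ℂ z))ᴴ *
          Matrix.fromBlocks 0 1 1 0 := by
  classical
  set J2 : Matrix (Fin p ⊕ Fin p) (Fin p ⊕ Fin p) ℂ := Matrix.fromBlocks 0 1 1 0 with hJ2
  have hJJ : J2 * J2 = 1 := by
    rw [hJ2, Matrix.fromBlocks_multiply]
    simp [← Matrix.fromBlocks_one]
  set zb := (starRingEnd ℂ) z with hzb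
  have hstar_zb : star zb = z := by simp [hzb]
  have hvA : IsUnit ((1 : H →L[ℂ] H) - z • A) := by
    have h := hz'.star
    rwa [star_sub, star_one, star_smul, ContinuousLinearMap.star_eq_adjoint,
      ContinuousLinearMap.adjoint_adjoint, hstar_zb] at h
  have hadjs : adjoint (Ring.inverse S) = Ring.inverse S := by
    rw [← ContinuousLinearMap.star_eq_adjoint, ← Ring.inverse_star, hS.star_eq]
  have hadjR : adjoint (Ring.inverse ((1 : H →L[ℂ] H) - zb • adjoint A)) =
      Ring.inverse ((1 : H →L[ℂ] H) - z • A) := by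
    rw [← ContinuousLinearMap.star_eq_adjoint, ← Ring.inverse_star]
    congr 1
    rw [star_sub, star_one, star_smul, ContinuousLinearMap.star_eq_adjoint,
      ContinuousLinearMap.adjoint_adjoint, hstar_zb]
  have hJ2H : J2ᴴ = J2 := by
    rw [hJ2, Matrix.fromBlocks_conjTranspose]
    simp
  have hG : J2 * (frameS A S Φ₁ Φ₂ zb)ᴴ * J2 =
      1 + (Complex.I * z) •
        (sandwich (Ring.inverse S ∘L Ring.inverse ((1 : H →L[ℂ] H) - z • A)) Φ₁ Φ₂ * J2) := by
    rw [frameS, Matrix.conjTranspose_sub, Matrix.conjTranspose_one, Matrix.conjTranspose_smul,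
      Matrix.conjTranspose_mul, sandwich_conjTranspose, ContinuousLinearMap.adjoint_comp,
      hadjs, hadjR, ← hJ2, hJ2H]
    have hc : star (Complex.I * zb) = -(Complex.I * z) := by
      rw [star_mul', hstar_zb, Complex.star_def, Complex.conj_I, neg_mul]
    rw [hc, neg_smul, sub_neg_eq_add, Matrix.mul_add, Matrix.mul_one, Matrix.add_mul, hJJ,
      Matrix.mul_smul, Matrix.smul_mul, ← Matrix.mul_assoc, hJJ, Matrix.one_mul]
  -- the key operator identity
  have hop : (Complex.I * z) • (Ring.inverse S ∘L Ring.inverse ((1 : H →L[ℂ] H) - z • A)) -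
      (Complex.I * z) • (Ring.inverse ((1 : H →L[ℂ] H) - z • adjoint A) ∘L Ring.inverse S) -
      ((Complex.I * z) * (Complex.I * z)) •
        ((Ring.inverse ((1 : H →L[ℂ] H) - z • adjoint A) ∘L Ring.inverse S) ∘L
          ((Φ₁ ∘L adjoint Φ₂ + Φ₂ ∘L adjoint Φ₁) ∘L
            (Ring.inverse S ∘L Ring.inverse ((1 : H →L[ℂ] H) - z • A)))) = 0 := by
    simp only [← ContinuousLinearMap.mul_def]
    simp only [← ContinuousLinearMap.mul_def] at hnode
    set s := Ring.inverse S with hs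
    set r := Ring.inverse ((1 : H →L[ℂ] H) - z • adjoint A) with hr
    set l := Ring.inverse ((1 : H →L[ℂ] H) - z • A) with hl
    set K : H →L[ℂ] H := Φ₁ ∘L adjoint Φ₂ + Φ₂ ∘L adjoint Φ₁ with hK
    have hSs : S * s = 1 := Ring.mul_inverse_cancel _ hSinv
    have hsS : s * S = 1 := Ring.inverse_mul_cancel _ hSinv
    have hKval : K = (-Complex.I) • (A * S - S * adjoint A) := by
      rw [hnode, smul_smul]
      simp [Complex.I_mul_I]
    have hmid : s * (A * S - S * adjoint A) * s = s * A - adjoint A * s := by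
      calc s * (A * S - S * adjoint A) * s
          = (s * A) * (S * s) - (s * S) * (adjoint A * s) := by noncomm_ring
        _ = s * A - adjoint A * s := by rw [hSs, hsS, mul_one, one_mul]
    have hcomp : (r * s) * (K * (s * l)) =
        (-Complex.I) • (r * (s * (A * S - S * adjoint A) * s) * l) := by
      rw [hKval, smul_mul_assoc, mul_smul_comm]
      congr 1
    rw [hcomp, hmid, smul_smul]
    have hc2 : (Complex.I * z) * (Complex.I * z) * -Complex.I = Complex.I * z ^ 2 := by
      have h : Complex.I * Complex.I = -1 := Complex.I_mul_I
      linear_combination (-Complex.I * z ^ 2) * h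
    rw [hc2]
    have hkey := key_op (H := H) A S z hz hvA
    have hrw : r * (s * A - adjoint A * s) * l = -(r * (adjoint A * s - s * A) * l) := by
      rw [show s * A - adjoint A * s = -(adjoint A * s - s * A) by abel]
      noncomm_ring
    rw [hrw, smul_neg, sub_neg_eq_add]
    rw [smul_sub] at hkey
    exact hkey
  have hmain : frameS A S Φ₁ Φ₂ z * (J2 * (frameS A S Φ₁ Φ₂ zb)ᴴ * J2) = 1 := by
    rw [hG, frameS, ← hJ2, expand_aux]
    set X := sandwich (Ring.inverse ((1 : H →L[ℂ] H) - z • adjoint A) ∘L Ring.inverse S) Φ₁ Φ₂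
      with hXdef
    set Z := sandwich (Ring.inverse S ∘L Ring.inverse ((1 : H →L[ℂ] H) - z • A)) Φ₁ Φ₂
      with hZdef
    have hPQ : (X * J2) * (Z * J2) =
        sandwich ((Ring.inverse ((1 : H →L[ℂ] H) - z • adjoint A) ∘L Ring.inverse S) ∘L
          ((Φ₁ ∘L adjoint Φ₂ + Φ₂ ∘L adjoint Φ₁) ∘L
            (Ring.inverse S ∘L Ring.inverse ((1 : H →L[ℂ] H) - z • A)))) Φ₁ Φ₂ * J2 := by
      rw [show (X * J2) * (Z * J2) = (X * J2 * Z) * J2 from (Matrix.mul_assoc (X * J2) Z J2).symm,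
        hXdef, hZdef, hJ2, sandwich_J_sandwich]
    rw [hPQ]
    have hfact : (Complex.I * z) • (Z * J2) - (Complex.I * z) • (X * J2) -
        ((Complex.I * z) * (Complex.I * z)) •
          (sandwich ((Ring.inverse ((1 : H →L[ℂ] H) - z • adjoint A) ∘L Ring.inverse S) ∘L
            ((Φ₁ ∘L adjoint Φ₂ + Φ₂ ∘L adjoint Φ₁) ∘L
              (Ring.inverse S ∘L Ring.inverse ((1 : H →L[ℂ] H) - z • A)))) Φ₁ Φ₂ * J2) =
        ((Complex.I * z) • Z - (Complex.I * z) • X -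
          ((Complex.I * z) * (Complex.I * z)) •
            sandwich ((Ring.inverse ((1 : H →L[ℂ] H) - z • adjoint A) ∘L Ring.inverse S) ∘L
              ((Φ₁ ∘L adjoint Φ₂ + Φ₂ ∘L adjoint Φ₁) ∘L
                (Ring.inverse S ∘L Ring.inverse ((1 : H →L[ℂ] H) - z • A)))) Φ₁ Φ₂) * J2 := by
      rw [Matrix.sub_mul, Matrix.sub_mul, Matrix.smul_mul, Matrix.smul_mul, Matrix.smul_mul]
    rw [hfact, hXdef, hZdef, ← sandwich_smul, ← sandwich_smul, ← sandwich_smul,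
      ← sandwich_sub, ← sandwich_sub, hop, sandwich_zero, Matrix.zero_mul, add_zero]
  have hcomm : (J2 * (frameS A S Φ₁ Φ₂ zb)ᴴ * J2) * frameS A S Φ₁ Φ₂ z = 1 :=
    mul_eq_one_comm.mp hmain
  refine ⟨⟨⟨frameS A S Φ₁ Φ₂ z, J2 * (frameS A S Φ₁ Φ₂ zb)ᴴ * J2, hmain, hcomm⟩, rfl⟩, ?_⟩
  rw [Matrix.inv_eq_right_inv hmain, hJ2]
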